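/- Let X, Y be normed linear spaces and x₁ ≠ x₂ in X. Let Φ_{x_i} : ℓ_∞(X,Y) → Lip^{x_i}(X,Y) be the isometries Φ_{x_i}(g)(x) = ‖x−x_i‖·g(x) + g(x_i). If f ∈ Lip^{x₁}(X,Y) ∩ Lip^{x₂}(X,Y) satisfies Φ_{x₂}(Φ_{x₁}^{-1}(f)) = f, then f(x) = 0 for all x ∈ X with ‖x − x₁‖ ≠ ‖x − x₂‖; in particular f(x₁) = 0 = f(x₂). -/
import Mathlib


section

variable {X Y : Type*} [NormedAddCommGroup X] [NormedSpace ℝ X]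
  [NormedAddCommGroup Y] [NormedSpace ℝ Y]

/-- `f` is Lipschitz at `x`. -/
def LipAt (x : X) (f : X → Y) : Prop :=
  ∃ k > (0 : ℝ), ∀ x' : X, ‖f x' - f x‖ ≤ k * ‖x' - x‖

/-- `f` is a bounded function. -/
def IsBddFun (f : X → Y) : Prop := ∃ C : ℝ, ∀ x' : X, ‖f x'‖ ≤ C

/-- The map `Φ_x : ℓ_∞(X,Y) → Lip^x(X,Y)`. -/
noncomputable def PhiMap (x : X) (g : X → Y) : X → Y :=
  fun x' => ‖x' - x‖ • g x' + g x

end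

/-- If `f ∈ Lip^{x₁}(X,Y) ∩ Lip^{x₂}(X,Y)` is a fixed point of `Φ_{x₂} ∘ Φ_{x₁}⁻¹`
(i.e. the `ℓ_∞` preimage `g` of `f` under `Φ_{x₁}` satisfies `Φ_{x₂}(g) = f`),
then `f` vanishes at every point `x` with `‖x - x₁‖ ≠ ‖x - x₂‖`; in particular
`f x₁ = 0 = f x₂`. -/
theorem fixed_point_of_Phi_composition {X Y : Type*} [NormedAddCommGroup X]
    [NormedSpace ℝ X] [NormedAddCommGroup Y] [NormedSpace ℝ Y]
    (x₁ x₂ : X) (hx : x₁ ≠ x₂) (f : X → Y)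
    (hf₁ : LipAt x₁ f) (hf₂ : LipAt x₂ f)
    (g : X → Y) (hg : IsBddFun g) (hg₁ : PhiMap x₁ g = f) (hg₂ : PhiMap x₂ g = f) :
    (∀ x : X, ‖x - x₁‖ ≠ ‖x - x₂‖ → f x = 0) ∧ f x₁ = 0 ∧ f x₂ = 0 := by
  obtain ⟨C, hC⟩ := hg
  have hC0 : 0 ≤ C := le_trans (norm_nonneg _) (hC x₁)
  have h1 : ∀ x, ‖x - x₁‖ • g x + g x₁ = f x := fun x => congrFun hg₁ x
  have h2 : ∀ x, ‖x - x₂‖ • g x + g x₂ = f x := fun x => congrFun hg₂ x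
  have key : ∀ x, (‖x - x₁‖ - ‖x - x₂‖) • g x = g x₂ - g x₁ := by
    intro x
    have h := (h1 x).trans (h2 x).symm
    rw [sub_smul]
    linear_combination (norm := module) h
  set d := ‖x₂ - x₁‖ with hd
  have hdpos : 0 < d := by
    rw [hd, norm_pos_iff, sub_ne_zero]; exact hx.symm
  have hbound : ∀ t : ℝ, 1/2 < t → t < 1 → ‖g x₂ - g x₁‖ ≤ (2*t - 1) * d * C := by
    intro t ht1 ht2
    set x := x₁ + t • (x₂ - x₁) with hxdef
    have e1 : ‖x - x₁‖ = t * d := by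
      have hxx : x - x₁ = t • (x₂ - x₁) := by rw [hxdef]; abel
      rw [hxx, norm_smul, Real.norm_eq_abs, abs_of_pos (by linarith)]
    have e2 : ‖x - x₂‖ = (1 - t) * d := by
      have hxx : x - x₂ = (t - 1) • (x₂ - x₁) := by
        rw [hxdef]; module
      rw [hxx, norm_smul, Real.norm_eq_abs, abs_of_neg (by linarith : t - 1 < 0)]
      ring
    have hk := key x
    rw [e1, e2, show t * d - (1 - t) * d = (2*t - 1) * d from by ring] at hk
    calc ‖g x₂ - g x₁‖ = ‖((2*t - 1) * d) • g x‖ := by rw [hk]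
      _ = |(2*t - 1) * d| * ‖g x‖ := by rw [norm_smul, Real.norm_eq_abs]
      _ = (2*t - 1) * d * ‖g x‖ := by
          rw [abs_of_pos (by nlinarith : (0:ℝ) < (2*t - 1) * d)]
      _ ≤ (2*t - 1) * d * C := by
          apply mul_le_mul_of_nonneg_left (hC x) (by nlinarith)
  have hc : g x₂ - g x₁ = 0 := by
    by_contra h
    have hcpos : 0 < ‖g x₂ - g x₁‖ := norm_pos_iff.mpr h
    set ε : ℝ := min (1/8 : ℝ) (‖g x₂ - g x₁‖ / (4 * (d*C + 1))) with hε
    have hεpos : 0 < ε := lt_min (by norm_num) (div_pos hcpos (by positivity))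
    have hε1 : ε ≤ 1/8 := min_le_left _ _
    have hε2 : ε ≤ ‖g x₂ - g x₁‖ / (4 * (d*C + 1)) := min_le_right _ _
    have hb := hbound (1/2 + ε) (by linarith) (by linarith)
    rw [show 2*(1/2 + ε) - 1 = 2*ε from by ring] at hb
    rw [le_div_iff₀ (by positivity)] at hε2
    nlinarith [hdpos, hC0, hcpos, hεpos]
  have hgx₁ : g x₂ = g x₁ := by rwa [sub_eq_zero] at hc
  have hfx₁ : f x₁ = g x₁ := by
    have := h1 x₁; simpa using this.symm
  have hg₁0 : g x₁ = 0 := by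
    have h2' := h2 x₁
    rw [hgx₁, hfx₁] at h2'
    have : ‖x₁ - x₂‖ • g x₁ = 0 := by
      linear_combination (norm := module) h2'
    rcases smul_eq_zero.mp this with h | h
    · exact (hx (sub_eq_zero.mp (norm_eq_zero.mp h))).elim
    · exact h
  have main : ∀ x : X, ‖x - x₁‖ ≠ ‖x - x₂‖ → f x = 0 := by
    intro x hxne
    have hk := key x
    rw [hc] at hk
    rcases smul_eq_zero.mp hk with h | h
    · exact absurd (sub_eq_zero.mp h) hxne
    · rw [← h1 x, h, hg₁0, smul_zero, add_zero]
  refine ⟨main, ?_, ?_⟩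
  · rw [hfx₁, hg₁0]
  · have := h2 x₂; simp at this
    rw [← this, hgx₁, hg₁0]
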